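/- If T ∈ B(ℂ^d) is power bounded, then the Cesàro means (1/n) Σ_{j=1}^n T^{*j}T^j converge (in norm) as n → ∞; conversely, if for some matrix T this sequence of Cesàro means converges, then T is power bounded. -/

import Mathlib

set_option maxHeartbeats 1000000

open Filter Topology

attribute [local instance] Matrix.frobeniusNormedAddCommGroup Matrix.frobeniusNormedSpace

section Aux
variable {d : ℕ}

lemma frob_sq (A : Matrix (Fin d) (Fin d) ℂ) :
    ‖A‖ ^ 2 = ∑ i, ∑ j, ‖A i j‖ ^ 2 := by
  rw [Matrix.frobenius_norm_def, ← Real.rpow_natCast _ 2, ← Real.rpow_mul (by positivity)]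
  norm_num

lemma entry_le_frob (A : Matrix (Fin d) (Fin d) ℂ) (i j : Fin d) :
    ‖A i j‖ ≤ ‖A‖ := by
  have h1 : ‖A i j‖ ^ 2 ≤ ‖A‖ ^ 2 := by
    rw [frob_sq]
    calc ‖A i j‖ ^ 2 ≤ ∑ j', ‖A i j'‖ ^ 2 :=
          Finset.single_le_sum (f := fun j' => ‖A i j'‖ ^ 2)
            (fun _ _ => by positivity) (Finset.mem_univ j)
      _ ≤ ∑ i', ∑ j', ‖A i' j'‖ ^ 2 :=
          Finset.single_le_sum (f := fun i' => ∑ j', ‖A i' j'‖ ^ 2)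
            (fun _ _ => by positivity) (Finset.mem_univ i)
  have := Real.sqrt_le_sqrt h1
  rwa [Real.sqrt_sq (norm_nonneg _), Real.sqrt_sq (norm_nonneg _)] at this

lemma mean_ergodic {E : Type*} [NormedAddCommGroup E] [NormedSpace ℂ E]
    [FiniteDimensional ℂ E] (f : E →ₗ[ℂ] E) (C : ℝ)
    (hC : ∀ (n : ℕ) (x : E), ‖(f ^ n) x‖ ≤ C * ‖x‖) (x : E) :
    ∃ y, Tendsto (fun n : ℕ => (n : ℂ)⁻¹ • ∑ k ∈ Finset.range n, (f ^ k) x)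
      atTop (𝓝 y) := by
  set K := LinearMap.ker (f - 1) with hK
  set R := LinearMap.range (f - 1) with hR
  have hdisj : Disjoint K R := by
    rw [Submodule.disjoint_def]
    intro y hyK hyR
    obtain ⟨z, hz⟩ := hyR
    have hfy : f y = y := by
      have := LinearMap.mem_ker.mp hyK
      have : f y - y = 0 := by simpa [LinearMap.sub_apply] using this
      linear_combination (norm := abel) this
    have hfz : f z = z + y := by
      have : f z - z = y := by simpa [LinearMap.sub_apply] using hz
      linear_combination (norm := abel) this
    have key : ∀ n : ℕ, (f ^ n) z = z + (n : ℂ) • y := by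
      intro n
      induction n with
      | zero => simp
      | succ n ih =>
        rw [pow_succ', Module.End.mul_apply, ih, map_add, map_smul, hfy, hfz]
        push_cast
        rw [add_smul, one_smul]
        abel
    by_contra hy0
    have hy : 0 < ‖y‖ := norm_pos_iff.mpr hy0
    obtain ⟨n, hn⟩ := exists_nat_gt ((C * ‖z‖ + ‖z‖) / ‖y‖)
    have h1 : (n : ℝ) * ‖y‖ ≤ C * ‖z‖ + ‖z‖ := by
      have : ‖(n : ℂ) • y‖ = ‖(f ^ n) z - z‖ := by rw [key n]; congr 1; abel
      have h2 : ‖(n : ℂ) • y‖ ≤ C * ‖z‖ + ‖z‖ := by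
        rw [this]
        calc ‖(f ^ n) z - z‖ ≤ ‖(f ^ n) z‖ + ‖z‖ := norm_sub_le _ _
          _ ≤ C * ‖z‖ + ‖z‖ := by have := hC n z; linarith
      simpa [norm_smul] using h2
    rw [div_lt_iff₀ hy] at hn
    linarith
  have hcompl : K ⊔ R = ⊤ := by
    apply Submodule.eq_top_of_finrank_eq
    have h1 := Submodule.finrank_sup_add_finrank_inf_eq K R
    rw [disjoint_iff.mp hdisj] at h1
    have h2 := LinearMap.finrank_range_add_finrank_ker (f - 1)
    simp only [finrank_bot, add_zero] at h1
    rw [hK, hR] at h1 ⊢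
    omega
  have hx : x ∈ K ⊔ R := hcompl ▸ Submodule.mem_top
  obtain ⟨k, hk, r, hr, hkr⟩ := Submodule.mem_sup.mp hx
  obtain ⟨z, hz⟩ := hr
  have hfk : ∀ j : ℕ, (f ^ j) k = k := by
    intro j
    induction j with
    | zero => simp
    | succ j ih =>
      rw [pow_succ', Module.End.mul_apply, ih]
      have : f k - k = 0 := by
        simpa [LinearMap.sub_apply] using LinearMap.mem_ker.mp hk
      linear_combination (norm := abel) this
  have hsum : ∀ n : ℕ, ∑ j ∈ Finset.range n, (f ^ j) x
      = (n : ℂ) • k + ((f ^ n) z - z) := by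
    intro n
    have hterm : ∀ j : ℕ, (f ^ j) x = k + ((f ^ (j + 1)) z - (f ^ j) z) := by
      intro j
      have : (f ^ j) r = (f ^ (j + 1)) z - (f ^ j) z := by
        rw [← hz, pow_succ, Module.End.mul_apply]
        simp [LinearMap.sub_apply, map_sub]
      rw [← hkr, map_add, hfk j, this]
    simp_rw [hterm]
    rw [Finset.sum_add_distrib, Finset.sum_const, Finset.card_range,
      Finset.sum_range_sub (fun j => (f ^ j) z)]
    simp [Nat.cast_smul_eq_nsmul]
  refine ⟨k, ?_⟩
  rw [tendsto_iff_norm_sub_tendsto_zero]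
  apply squeeze_zero' (Eventually.of_forall fun n => norm_nonneg _)
    (g := fun n : ℕ => (C * ‖z‖ + ‖z‖) * (n : ℝ)⁻¹)
  · filter_upwards [eventually_ge_atTop 1] with n hn
    have hn0 : ((n : ℕ) : ℂ) ≠ 0 := Nat.cast_ne_zero.mpr (by omega)
    have : (n : ℂ)⁻¹ • ∑ j ∈ Finset.range n, (f ^ j) x - k
        = (n : ℂ)⁻¹ • ((f ^ n) z - z) := by
      rw [hsum n, smul_add, smul_smul, inv_mul_cancel₀ hn0, one_smul]
      abel
    rw [this, norm_smul]
    have hb : ‖(f ^ n) z - z‖ ≤ C * ‖z‖ + ‖z‖ := by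
      calc ‖(f ^ n) z - z‖ ≤ ‖(f ^ n) z‖ + ‖z‖ := norm_sub_le _ _
        _ ≤ C * ‖z‖ + ‖z‖ := by have := hC n z; linarith
    have hnn : ‖((n : ℕ) : ℂ)⁻¹‖ = (n : ℝ)⁻¹ := by
      rw [norm_inv, Complex.norm_natCast]
    rw [hnn, mul_comm]
    exact mul_le_mul_of_nonneg_right hb (by positivity)
  · have h0 : Tendsto (fun n : ℕ => ((n : ℝ))⁻¹) atTop (𝓝 0) :=
      tendsto_inv_atTop_zero.comp tendsto_natCast_atTop_atTop
    simpa using h0.const_mul (C * ‖z‖ + ‖z‖)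

end Aux

/-- A matrix `T` is power bounded iff the Cesàro means
`(1/n) ∑_{j=1}^n T^{*j} T^j` converge (entrywise) as `n → ∞`. -/
theorem stmt11 {d : ℕ} (T : Matrix (Fin d) (Fin d) ℂ) :
    (∃ M : ℝ, ∀ (n : ℕ) (i j : Fin d), ‖(T ^ n) i j‖ ≤ M) ↔
      (∃ A : Matrix (Fin d) (Fin d) ℂ, ∀ i j : Fin d,
        Tendsto (fun n : ℕ =>
          (((n : ℂ)⁻¹ •
            ∑ k ∈ Finset.range n, ((T ^ (k + 1)).conjTranspose * T ^ (k + 1))) i j))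
          atTop (𝓝 (A i j))) := by
  constructor
  · rintro ⟨M, hM⟩
    set M₀ : ℝ := max M 0 with hM₀def
    have hM₀ : ∀ (n : ℕ) (i j : Fin d), ‖(T ^ n) i j‖ ≤ M₀ :=
      fun n i j => le_trans (hM n i j) (le_max_left _ _)
    have hTn : ∀ n : ℕ, ‖T ^ n‖ ≤ d * M₀ := by
      intro n
      have h1 : ‖T ^ n‖ ^ 2 ≤ (d * M₀) ^ 2 := by
        rw [frob_sq]
        calc ∑ i, ∑ j, ‖(T ^ n) i j‖ ^ 2 ≤ ∑ _i : Fin d, ∑ _j : Fin d, M₀ ^ 2 := by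
              apply Finset.sum_le_sum; intro i _
              apply Finset.sum_le_sum; intro j _
              have h := hM₀ n i j
              have : (0:ℝ) ≤ M₀ := le_max_right _ _
              nlinarith [norm_nonneg ((T ^ n) i j)]
          _ = (d * M₀) ^ 2 := by simp [Finset.sum_const]; ring
      have h2 := Real.sqrt_le_sqrt h1
      rwa [Real.sqrt_sq (norm_nonneg _), Real.sqrt_sq (by positivity)] at h2
    -- the linear map X ↦ Tᴴ X T
    set B : Matrix (Fin d) (Fin d) ℂ →ₗ[ℂ] Matrix (Fin d) (Fin d) ℂ :=
      { toFun := fun X => T.conjTranspose * X * T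
        map_add' := by intro X Y; rw [Matrix.mul_add, Matrix.add_mul]
        map_smul' := by intro c X; simp [Matrix.mul_smul, Matrix.smul_mul] } with hBdef
    have hBn : ∀ (n : ℕ) (X : Matrix (Fin d) (Fin d) ℂ),
        (B ^ n) X = (T ^ n).conjTranspose * X * T ^ n := by
      intro n
      induction n with
      | zero => intro X; simp
      | succ n ih =>
        intro X
        rw [pow_succ', Module.End.mul_apply, ih]
        show T.conjTranspose * ((T ^ n).conjTranspose * X * T ^ n) * T = _
        rw [pow_succ, Matrix.conjTranspose_mul]
        noncomm_ring
    have hpb : ∀ (n : ℕ) (X : Matrix (Fin d) (Fin d) ℂ),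
        ‖(B ^ n) X‖ ≤ (d * M₀) * (d * M₀) * ‖X‖ := by
      intro n X
      rw [hBn]
      calc ‖(T ^ n).conjTranspose * X * T ^ n‖
          ≤ ‖(T ^ n).conjTranspose * X‖ * ‖T ^ n‖ := Matrix.frobenius_norm_mul _ _
        _ ≤ ‖(T ^ n).conjTranspose‖ * ‖X‖ * ‖T ^ n‖ :=
            mul_le_mul_of_nonneg_right (Matrix.frobenius_norm_mul _ _) (norm_nonneg _)
        _ = ‖T ^ n‖ * ‖X‖ * ‖T ^ n‖ := by rw [Matrix.frobenius_norm_conjTranspose]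
        _ ≤ (d * M₀) * (d * M₀) * ‖X‖ := by
            have h1 := hTn n
            have h2 : (0:ℝ) ≤ ‖T ^ n‖ := norm_nonneg _
            have h3 : (0:ℝ) ≤ ‖X‖ := norm_nonneg _
            have h4 : (0:ℝ) ≤ ↑d * M₀ := le_trans h2 h1
            nlinarith [mul_le_mul h1 h1 h2 h4]
    obtain ⟨Y, hY⟩ := mean_ergodic B ((d * M₀) * (d * M₀)) hpb (B 1)
    have hfun : ∀ n : ℕ, (n : ℂ)⁻¹ • ∑ k ∈ Finset.range n, (B ^ k) (B 1)
        = (n : ℂ)⁻¹ • ∑ k ∈ Finset.range n, ((T ^ (k + 1)).conjTranspose * T ^ (k + 1)) := by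
      intro n
      congr 1
      apply Finset.sum_congr rfl
      intro k _
      rw [← Module.End.mul_apply, ← pow_succ, hBn]
      rw [Matrix.mul_one]
    refine ⟨Y, fun i j => ?_⟩
    have hY' : Tendsto (fun n : ℕ =>
        (n : ℂ)⁻¹ • ∑ k ∈ Finset.range n, ((T ^ (k + 1)).conjTranspose * T ^ (k + 1)))
        atTop (𝓝 Y) := by
      exact Tendsto.congr hfun hY
    rw [tendsto_iff_norm_sub_tendsto_zero]
    apply squeeze_zero (fun n => norm_nonneg _)
      (g := fun n : ℕ => ‖((n : ℂ)⁻¹ • ∑ k ∈ Finset.range n,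
        ((T ^ (k + 1)).conjTranspose * T ^ (k + 1))) - Y‖)
    · intro n
      have : (((n : ℂ)⁻¹ • ∑ k ∈ Finset.range n,
          ((T ^ (k + 1)).conjTranspose * T ^ (k + 1))) i j) - Y i j
          = (((n : ℂ)⁻¹ • ∑ k ∈ Finset.range n,
          ((T ^ (k + 1)).conjTranspose * T ^ (k + 1))) - Y) i j := by
        simp [Matrix.sub_apply]
      rw [this]
      exact entry_le_frob _ i j
    · exact tendsto_iff_norm_sub_tendsto_zero.mp hY'
  · rintro ⟨A, hA⟩
    -- a n = ‖T^n‖², Frobenius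
    set a : ℕ → ℝ := fun n => ‖T ^ n‖ ^ 2 with hadef
    have ha0 : ∀ n, 0 ≤ a n := fun n => by positivity
    have hsub : ∀ p q : ℕ, a (p + q) ≤ a p * a q := by
      intro p q
      have h := Matrix.frobenius_norm_mul (T ^ p) (T ^ q)
      rw [← pow_add] at h
      have h2 : (0:ℝ) ≤ ‖T ^ (p+q)‖ := norm_nonneg _
      have h3 : (0:ℝ) ≤ ‖T ^ p‖ := norm_nonneg _
      have h4 : (0:ℝ) ≤ ‖T ^ q‖ := norm_nonneg _
      simp only [hadef]
      nlinarith
    -- trace identity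
    have htr : ∀ m : ℕ, (∑ i, ((T ^ m).conjTranspose * T ^ m) i i) = (a m : ℂ) := by
      intro m
      have h1 : ∀ i, (((T ^ m).conjTranspose * T ^ m) i i)
          = ((∑ l, ‖(T ^ m) l i‖ ^ 2 : ℝ) : ℂ) := by
        intro i
        rw [Matrix.mul_apply, Complex.ofReal_sum]
        apply Finset.sum_congr rfl
        intro l _
        rw [Matrix.conjTranspose_apply, Complex.star_def, mul_comm, Complex.mul_conj]
        norm_cast
        rw [Complex.sq_norm]
      simp_rw [h1]
      rw [← Complex.ofReal_sum]
      norm_cast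
      rw [hadef]
      dsimp only
      rw [frob_sq, Finset.sum_comm]
    -- Cesàro sums of traces converge
    set c : ℕ → ℝ := fun n => (∑ i, (((n : ℂ)⁻¹ •
      ∑ k ∈ Finset.range n, ((T ^ (k + 1)).conjTranspose * T ^ (k + 1))) i i)).re with hcdef
    have hctend : Tendsto c atTop (𝓝 ((∑ i, A i i).re)) := by
      apply (Complex.continuous_re.tendsto _).comp
      exact tendsto_finset_sum _ (fun i _ => hA i i)
    have hceq : ∀ n : ℕ, c n = (n : ℝ)⁻¹ * ∑ k ∈ Finset.range n, a (k + 1) := by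
      intro n
      rw [hcdef]
      simp only [Matrix.smul_apply, smul_eq_mul]
      rw [← Finset.mul_sum]
      have : (∑ i, (∑ k ∈ Finset.range n,
          ((T ^ (k + 1)).conjTranspose * T ^ (k + 1))) i i)
          = ((∑ k ∈ Finset.range n, a (k + 1) : ℝ) : ℂ) := by
        simp only [Matrix.sum_apply]
        rw [Finset.sum_comm]
        rw [Complex.ofReal_sum]
        apply Finset.sum_congr rfl
        intro k _
        exact htr (k + 1)
      rw [this]
      have hn : ((n : ℕ) : ℂ)⁻¹ = (((n : ℝ)⁻¹ : ℝ) : ℂ) := by push_cast; ring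
      rw [hn, ← Complex.ofReal_mul, Complex.ofReal_re]
    -- bound on Cesàro means
    obtain ⟨C, hC⟩ : ∃ C : ℝ, ∀ n, c n ≤ C := by
      obtain ⟨C, hC⟩ := hctend.bddAbove_range
      exact ⟨C, fun n => hC (Set.mem_range_self n)⟩
    -- key bound: for N ≥ 2, √(a N) ≤ C
    have hkey : ∀ N : ℕ, 2 ≤ N → Real.sqrt (a N) ≤ C := by
      intro N hN
      set m : ℕ := N - 1 with hmdef
      have hm1 : 1 ≤ m := by omega
      have hpair : ∀ j ∈ Finset.range m, 2 * Real.sqrt (a N) ≤ a (j + 1) + a (N - 1 - j) := by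
        intro j hj
        rw [Finset.mem_range] at hj
        have hidx : (j + 1) + (N - 1 - j) = N := by omega
        have h1 : a N ≤ a (j + 1) * a (N - 1 - j) := by
          have := hsub (j + 1) (N - 1 - j)
          rwa [hidx] at this
        have hx := ha0 (j + 1)
        have hy := ha0 (N - 1 - j)
        have h2 : Real.sqrt (a N) ≤ Real.sqrt (a (j+1)) * Real.sqrt (a (N-1-j)) := by
          rw [← Real.sqrt_mul hx]
          exact Real.sqrt_le_sqrt h1
        nlinarith [sq_nonneg (Real.sqrt (a (j+1)) - Real.sqrt (a (N-1-j))),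
          Real.sq_sqrt hx, Real.sq_sqrt hy, Real.sqrt_nonneg (a N)]
      have hsum2 : (m : ℝ) * (2 * Real.sqrt (a N)) ≤ 2 * ∑ k ∈ Finset.range m, a (k + 1) := by
        have h1 : (m : ℝ) * (2 * Real.sqrt (a N))
            ≤ ∑ j ∈ Finset.range m, (a (j + 1) + a (N - 1 - j)) := by
          calc (m : ℝ) * (2 * Real.sqrt (a N))
              = ∑ _j ∈ Finset.range m, 2 * Real.sqrt (a N) := by
                rw [Finset.sum_const, Finset.card_range, nsmul_eq_mul]
            _ ≤ _ := Finset.sum_le_sum hpair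
        have h2 : ∑ j ∈ Finset.range m, a (N - 1 - j) = ∑ j ∈ Finset.range m, a (j + 1) := by
          rw [← Finset.sum_range_reflect (fun j => a (j + 1)) m]
          apply Finset.sum_congr rfl
          intro j hj
          rw [Finset.mem_range] at hj
          congr 1
          omega
        rw [Finset.sum_add_distrib, h2] at h1
        linarith
      have hS : ∑ k ∈ Finset.range m, a (k + 1) ≤ C * m := by
        have hc := hC m
        rw [hceq m] at hc
        have hm0 : (0:ℝ) < (m:ℝ) := by exact_mod_cast hm1
        have h5 := (inv_mul_le_iff₀ hm0).mp hc
        linarith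
      have hm0 : (0:ℝ) < (m:ℝ) := by exact_mod_cast hm1
      nlinarith
    -- assemble the bound
    refine ⟨max 1 (max (Real.sqrt (a 1)) C), ?_⟩
    intro n i j
    have hentry : ‖(T ^ n) i j‖ ≤ Real.sqrt (a n) := by
      have h1 : ‖(T ^ n) i j‖ ≤ ‖T ^ n‖ := entry_le_frob _ i j
      have h2 : ‖T ^ n‖ = Real.sqrt (a n) := by
        rw [hadef, Real.sqrt_sq (norm_nonneg _)]
      rw [h2] at h1
      exact h1
    rcases Nat.lt_or_ge n 2 with h2 | h2
    · interval_cases n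
      · rw [pow_zero]
        rcases eq_or_ne i j with rfl | hij
        · simp [Matrix.one_apply_eq]
        · simp only [Matrix.one_apply_ne hij, norm_zero]
          exact le_trans zero_le_one (le_max_left _ _)
      · exact le_trans hentry (le_trans (le_max_left _ _) (le_max_right _ _))
    · exact le_trans hentry (le_trans (hkey n h2)
        (le_trans (le_max_right _ _) (le_max_right _ _)))
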